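/- Let A be a unital ring, N ≥ 1, and R, R₀ ∈ A, W_n, χ_n ∈ A for n ∈ {1,…,N}, with χ_n·W_n = W_n for all n and R = R₀ − Σ_{n=1}^{N} R₀·W_n·R. Form the N×N matrix M over A with entries M_{nm} := W_n·R₀·χ_m. If Id + M is invertible in the ring of N×N matrices over A, with inverse having entries B_{nm}, then R = R₀ − Σ_{n=1}^{N} Σ_{m=1}^{N} R₀·χ_n·B_{nm}·W_m·R₀. -/

import Mathlib

open scoped BigOperators

/-- N-scatterer Lippmann–Schwinger representation: from the second
resolvent identity `R = R₀ − Σ_n R₀·W_n·R`, `χ_n·W_n = W_n`, and invertibility of the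
`N×N` block matrix `Id + M` (with `M_{nm} = W_n·R₀·χ_m`) with inverse entries `B_{nm}`,
one gets `R = R₀ − Σ_{n,m} R₀·χ_n·B_{nm}·W_m·R₀`. -/
theorem lippmann_schwinger_N_scatterers
    {A : Type*} [Ring A] (N : ℕ) (hN : 1 ≤ N)
    (R R₀ : A) (W χ : Fin N → A)
    (hχW : ∀ n, χ n * W n = W n)
    (hR : R = R₀ - ∑ n : Fin N, R₀ * W n * R)
    (M Bm : Matrix (Fin N) (Fin N) A)
    (hM : ∀ n m, M n m = W n * R₀ * χ m)
    (hB1 : (1 + M) * Bm = 1) (hB2 : Bm * (1 + M) = 1) :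
    R = R₀ - ∑ n : Fin N, ∑ m : Fin N, R₀ * χ n * Bm n m * W m * R₀ := by
  set u : Fin N → A := fun m => W m * R with hu
  set v : Fin N → A := fun m => W m * R₀ with hv
  have hMu : (1 + M).mulVec u = v := by
    funext k
    have hMuk : M.mulVec u k = ∑ m : Fin N, W k * (R₀ * W m * R) := by
      simp only [Matrix.mulVec, dotProduct]
      refine Finset.sum_congr rfl fun m _ => ?_
      rw [hM, hu]
      calc W k * R₀ * χ m * (W m * R) = W k * R₀ * (χ m * (W m * R)) := by
            rw [mul_assoc]
        _ = W k * R₀ * (χ m * W m * R) := by rw [mul_assoc (χ m)]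
        _ = W k * R₀ * (W m * R) := by rw [hχW]
        _ = W k * (R₀ * W m * R) := by simp [mul_assoc]
    simp only [Matrix.add_mulVec, Matrix.one_mulVec, Pi.add_apply, hMuk]
    simp only [hu, hv]
    rw [← Finset.mul_sum, ← mul_add]
    congr 1
    conv_lhs => lhs; rw [hR]
    rw [sub_add_cancel]
  have huB : u = Bm.mulVec v := by
    rw [← hMu, Matrix.mulVec_mulVec, hB2, Matrix.one_mulVec]
  have hun : ∀ n, W n * R = ∑ m, Bm n m * (W m * R₀) := by
    intro n
    have := congrFun huB n
    simpa [hu, hv, Matrix.mulVec, dotProduct] using this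
  conv_lhs => rw [hR]
  congr 1
  apply Finset.sum_congr rfl
  intro n _
  have h1 : R₀ * W n * R = R₀ * χ n * (W n * R) := by
    calc R₀ * W n * R = R₀ * (χ n * W n) * R := by rw [hχW]
      _ = R₀ * χ n * (W n * R) := by simp [mul_assoc]
  rw [h1, hun n, Finset.mul_sum]
  refine Finset.sum_congr rfl fun m _ => ?_
  simp [mul_assoc]
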